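/- Let O be a finite type, let o0 and o1 be distributions on O with o0 y > 0 and o1 y > 0 for every y ∈ O, and let w0, w1 > 0 with w0 + w1 = 1. Then there exists ε0 > 0 such that for every ε with 0 < ε ≤ ε0 there exists a joint distribution μ on O × Bool × Bool (observation, prediction, protected attribute Z) satisfying: Pr[Z = z] = w_z; the conditional distribution of the observation given Z = z is o_z; Pr[prediction = yp ∧ Z = z] > 0 for all yp, z; μ passes the predictive parity test, i.e., Pr[observation = yo | prediction = yp ∧ Z = 0] = Pr[observation = yo | prediction = yp ∧ Z = 1] for all yo, yp; and the output disparity satisfies dTV(prediction | Z = 0, prediction | Z = 1) = 1 − ε. -/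

import Mathlib

/-- A probability distribution on a finite type: nonnegative and summing to 1. -/
def IsDist {Y : Type*} [Fintype Y] (p : Y → ℝ) : Prop :=
  (∀ y, 0 ≤ p y) ∧ ∑ y, p y = 1

/-- Total variation distance between two distributions on a finite type. -/
noncomputable def dTV {Y : Type*} [Fintype Y] (p q : Y → ℝ) : ℝ :=
  (1 / 2) * ∑ y, |p y - q y|

/-- In a joint distribution `μ` on construct × prediction × protected attribute,
the probability that the protected attribute `Z` equals `z`. -/
def prZ {C P : Type*} [Fintype C] [Fintype P] (μ : C × P × Bool → ℝ) (z : Bool) : ℝ :=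
  ∑ c, ∑ p, μ (c, p, z)

/-- The conditional distribution of the prediction given `Z = z`. -/
noncomputable def predCond {C P : Type*} [Fintype C] [Fintype P]
    (μ : C × P × Bool → ℝ) (z : Bool) : P → ℝ :=
  fun p => (∑ c, μ (c, p, z)) / prZ μ z

/-- The conditional distribution of the construct given `Z = z`. -/
noncomputable def consCond {C P : Type*} [Fintype C] [Fintype P]
    (μ : C × P × Bool → ℝ) (z : Bool) : C → ℝ :=
  fun c => (∑ p, μ (c, p, z)) / prZ μ z

/-- In a joint distribution on observation × prediction × Z (prediction Bool-valued),
the probability of the event `prediction = yp ∧ Z = z`. -/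
def prPredZ {O : Type*} [Fintype O] (μ : O × Bool × Bool → ℝ) (yp z : Bool) : ℝ :=
  ∑ yo, μ (yo, yp, z)

/-- Given strictly positive observed distributions `o0, o1` for the two
groups and group weights `w0, w1 > 0` with `w0 + w1 = 1`, there exists `ε0 > 0` such
that for every `0 < ε ≤ ε0` there is a model (joint distribution on
observation × prediction × Z) realizing these marginals, giving every
(prediction, group) pair positive probability, passing the predictive parity test, and
having output disparity `dTV(prediction | Z=0, prediction | Z=1) = 1 - ε`. -/
theorem predictive_parity_allows_arbitrary_output_disparity
    {O : Type*} [Fintype O] (o0 o1 : O → ℝ) (ho0 : IsDist o0) (ho1 : IsDist o1)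
    (ho0pos : ∀ y, 0 < o0 y) (ho1pos : ∀ y, 0 < o1 y)
    (w0 w1 : ℝ) (hw0 : 0 < w0) (hw1 : 0 < w1) (hw : w0 + w1 = 1) :
    ∃ ε0 : ℝ, 0 < ε0 ∧ ∀ ε : ℝ, 0 < ε → ε ≤ ε0 →
      ∃ μ : O × Bool × Bool → ℝ, IsDist μ ∧
        prZ μ false = w0 ∧ prZ μ true = w1 ∧
        consCond μ false = o0 ∧ consCond μ true = o1 ∧
        (∀ yp z : Bool, 0 < prPredZ μ yp z) ∧
        (∀ (yo : O) (yp : Bool),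
          μ (yo, yp, false) / prPredZ μ yp false = μ (yo, yp, true) / prPredZ μ yp true) ∧
        dTV (predCond μ false) (predCond μ true) = 1 - ε := by
  -- O is nonempty
  have hne : (Finset.univ : Finset O).Nonempty := by
    rcases (Finset.univ : Finset O).eq_empty_or_nonempty with h | h
    · exfalso; have h2 := ho0.2; rw [h, Finset.sum_empty] at h2; norm_num at h2
    · exact h
  set m : ℝ := Finset.univ.inf' hne (fun y => min (o0 y) (o1 y)) with hm
  have hmpos : 0 < m := by
    rw [hm, Finset.lt_inf'_iff]
    intro y _; exact lt_min (ho0pos y) (ho1pos y)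
  have hm0 : ∀ y : O, m ≤ o0 y := fun y =>
    le_trans (Finset.inf'_le _ (Finset.mem_univ y)) (min_le_left _ _)
  have hm1 : ∀ y : O, m ≤ o1 y := fun y =>
    le_trans (Finset.inf'_le _ (Finset.mem_univ y)) (min_le_right _ _)
  have ho0le : ∀ y, o0 y ≤ 1 := by
    intro y
    calc o0 y ≤ ∑ x, o0 x := Finset.single_le_sum (fun i _ => ho0.1 i) (Finset.mem_univ y)
    _ = 1 := ho0.2
  have ho1le : ∀ y, o1 y ≤ 1 := by
    intro y
    calc o1 y ≤ ∑ x, o1 x := Finset.single_le_sum (fun i _ => ho1.1 i) (Finset.mem_univ y)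
    _ = 1 := ho1.2
  refine ⟨min m (1/2), lt_min hmpos (by norm_num), ?_⟩
  intro ε hε hεle
  have hεm : ε ≤ m := le_trans hεle (min_le_left _ _)
  have hεh : ε ≤ 1/2 := le_trans hεle (min_le_right _ _)
  set t : ℝ := ε / 2 with htdef
  have ht0 : 0 < t := by positivity
  have ht4 : t ≤ 1/4 := by rw [htdef]; linarith
  have h12t : (0:ℝ) < 1 - 2*t := by linarith
  have h12t' : (1:ℝ) - 2*t ≠ 0 := ne_of_gt h12t
  have ht1 : (0:ℝ) < 1 - t := by linarith
  set qF : O → ℝ := fun y => ((1-t) * o0 y - t * o1 y) / (1 - 2*t) with hqF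
  set qT : O → ℝ := fun y => ((1-t) * o1 y - t * o0 y) / (1 - 2*t) with hqT
  have hqFnn : ∀ y, 0 ≤ qF y := by
    intro y
    apply div_nonneg _ (le_of_lt h12t)
    have h1 : t * o1 y ≤ t := by nlinarith [ho1le y, ho1.1 y]
    have h2 : t ≤ o0 y / 2 := by have := hm0 y; rw [htdef]; linarith
    nlinarith [ho0pos y]
  have hqTnn : ∀ y, 0 ≤ qT y := by
    intro y
    apply div_nonneg _ (le_of_lt h12t)
    have h1 : t * o0 y ≤ t := by nlinarith [ho0le y, ho0.1 y]
    have h2 : t ≤ o1 y / 2 := by have := hm1 y; rw [htdef]; linarith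
    nlinarith [ho1pos y]
  have hqFsum : ∑ y, qF y = 1 := by
    rw [hqF]
    rw [← Finset.sum_div, Finset.sum_sub_distrib, ← Finset.mul_sum, ← Finset.mul_sum,
      ho0.2, ho1.2]
    field_simp
    rw [div_eq_iff (by linarith)]; ring
  have hqTsum : ∑ y, qT y = 1 := by
    rw [hqT]
    rw [← Finset.sum_div, Finset.sum_sub_distrib, ← Finset.mul_sum, ← Finset.mul_sum,
      ho0.2, ho1.2]
    field_simp
    rw [div_eq_iff (by linarith)]; ring
  have hmix0 : ∀ y, (1-t) * qF y + t * qT y = o0 y := by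
    intro y; rw [hqF, hqT]; field_simp; rw [div_eq_iff (by linarith)]; ring
  have hmix1 : ∀ y, t * qF y + (1-t) * qT y = o1 y := by
    intro y; rw [hqF, hqT]; field_simp; rw [div_eq_iff (by linarith)]; ring
  set μ : O × Bool × Bool → ℝ := fun x =>
    (if x.2.2 then w1 else w0) * (if x.2.1 = x.2.2 then 1 - t else t) *
      (if x.2.1 then qT x.1 else qF x.1) with hμ
  have hμval : ∀ (yo : O) (yp z : Bool),
      μ (yo, yp, z) = (if z then w1 else w0) * (if yp = z then 1 - t else t) *
        (if yp then qT yo else qF yo) := fun _ _ _ => rfl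
  -- sums over observation for fixed prediction and group
  have hsum : ∀ yp z : Bool, ∑ yo, μ (yo, yp, z)
      = (if z then w1 else w0) * (if yp = z then 1 - t else t) := by
    intro yp z
    have : ∑ yo, μ (yo, yp, z)
        = (if z then w1 else w0) * (if yp = z then 1 - t else t) *
          ∑ yo, (if yp then qT yo else qF yo) := by
      rw [Finset.mul_sum]
    rw [this]
    cases yp <;> simp [hqFsum, hqTsum]
  have hprPredZ : ∀ yp z : Bool, prPredZ μ yp z
      = (if z then w1 else w0) * (if yp = z then 1 - t else t) := by
    intro yp z; rw [prPredZ, hsum]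
  have hprZf : prZ μ false = w0 := by
    rw [prZ]
    have : ∀ c : O, ∑ p : Bool, μ (c, p, false)
        = w0 * (1-t) * qF c + w0 * t * qT c := by
      intro c; rw [Fintype.sum_bool]; simp [hμval]; ring
    rw [Finset.sum_congr rfl (fun c _ => this c), Finset.sum_add_distrib,
      ← Finset.mul_sum, ← Finset.mul_sum, hqFsum, hqTsum]
    ring
  have hprZt : prZ μ true = w1 := by
    rw [prZ]
    have : ∀ c : O, ∑ p : Bool, μ (c, p, true)
        = w1 * t * qF c + w1 * (1-t) * qT c := by
      intro c; rw [Fintype.sum_bool]; simp [hμval]; ring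
    rw [Finset.sum_congr rfl (fun c _ => this c), Finset.sum_add_distrib,
      ← Finset.mul_sum, ← Finset.mul_sum, hqFsum, hqTsum]
    ring
  refine ⟨μ, ⟨?_, ?_⟩, hprZf, hprZt, ?_, ?_, ?_, ?_, ?_⟩
  · -- nonnegativity
    rintro ⟨yo, yp, z⟩
    have h0F := hqFnn yo; have h0T := hqTnn yo
    cases yp <;> cases z <;> simp [hμval] <;> positivity
  · -- total mass 1
    rw [Fintype.sum_prod_type]
    have : ∀ c : O, ∑ x : Bool × Bool, μ (c, x.1, x.2)
        = w0 * (1-t) * qF c + w0 * t * qT c + w1 * t * qF c + w1 * (1-t) * qT c := by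
      intro c
      rw [Fintype.sum_prod_type, Fintype.sum_bool, Fintype.sum_bool, Fintype.sum_bool]
      simp [hμval]; ring
    rw [Finset.sum_congr rfl (fun c _ => this c)]
    have expand : ∀ c : O, w0 * (1-t) * qF c + w0 * t * qT c + w1 * t * qF c
        + w1 * (1-t) * qT c
        = (w0 * (1-t) + w1 * t) * qF c + (w0 * t + w1 * (1-t)) * qT c := by
      intro c; ring
    rw [Finset.sum_congr rfl (fun c _ => expand c), Finset.sum_add_distrib,
      ← Finset.mul_sum, ← Finset.mul_sum, hqFsum, hqTsum]
    linarith
  · -- consCond false = o0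
    funext c
    rw [consCond, hprZf, Fintype.sum_bool]
    have : μ (c, true, false) + μ (c, false, false) = w0 * ((1-t) * qF c + t * qT c) := by
      simp [hμval]; ring
    rw [this, hmix0]
    field_simp
  · -- consCond true = o1
    funext c
    rw [consCond, hprZt, Fintype.sum_bool]
    have : μ (c, true, true) + μ (c, false, true) = w1 * (t * qF c + (1-t) * qT c) := by
      simp [hμval]; ring
    rw [this, hmix1]
    field_simp
  · -- positivity of prPredZ
    intro yp z
    rw [hprPredZ]
    cases yp <;> cases z <;> simp <;> positivity
  · -- predictive parity
    intro yo yp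
    have h1 : w0 * t ≠ 0 := by positivity
    have h2 : w1 * t ≠ 0 := by positivity
    have h3 : w0 * (1 - t) ≠ 0 := by positivity
    have h4 : w1 * (1 - t) ≠ 0 := by positivity
    rw [hprPredZ, hprPredZ, hμval, hμval]
    cases yp <;> simp <;> field_simp <;> ring
  · -- dTV
    have hw0' : w0 ≠ 0 := ne_of_gt hw0
    have hw1' : w1 ≠ 0 := ne_of_gt hw1
    have hpc : ∀ z p : Bool, predCond μ z p = (if p = z then 1 - t else t) := by
      intro z p
      rw [predCond, hsum p z]
      cases z <;> cases p <;> simp [hprZf, hprZt] <;> field_simp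
    have e1 : predCond μ false true - predCond μ true true = 2*t - 1 := by
      rw [hpc, hpc]; norm_num; ring
    have e2 : predCond μ false false - predCond μ true false = 1 - 2*t := by
      rw [hpc, hpc]; norm_num; ring
    rw [dTV, Fintype.sum_bool, e1, e2, abs_of_nonpos (by linarith),
      abs_of_nonneg (by linarith)]
    rw [htdef]; ring
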